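/- Suppose 0 < α ≤ 1 and F ⊂ ℝ^p is compact. If {f₁, f₂, …} is a countable dense subset of C₁^α(F), then there is a dense Gδ subset 𝒢 of C₁^α(F) such that sup_{f ∈ 𝒢} D_*^f(F) ≤ sup_{k ∈ ℕ} D_*^{f_k}(F). -/

import Mathlib

open MeasureTheory
set_option linter.unusedSectionVars false

noncomputable section

/-- `C₁^α(F)`: the set of 1-Hölder-α functions `F → ℝ`, as a subset of the bounded
continuous functions on `F` (which carry the supremum metric). -/
def HolderBall (α : ℝ) {p : ℕ} (F : Set (EuclideanSpace ℝ (Fin p))) :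
    Set (BoundedContinuousFunction ↥F ℝ) :=
  {f | ∀ x y : ↥F,
    |f x - f y| ≤ dist (x : EuclideanSpace ℝ (Fin p)) (y : EuclideanSpace ℝ (Fin p)) ^ α}

/-- `D_*^f(F) = sup {d : λ{r : dim_H (f⁻¹(r)) ≥ d} > 0}`. -/
def DstarF {p : ℕ} (F : Set (EuclideanSpace ℝ (Fin p))) (f : ↥F → ℝ) : ℝ :=
  sSup {d : ℝ | 0 < volume {r : ℝ | ENNReal.ofReal d ≤ dimH (Subtype.val '' (f ⁻¹' {r}))}}

namespace Stmt18Aux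

open Set Metric ENNReal BoundedContinuousFunction
open scoped BoundedContinuousFunction

variable {X : Type*} [EMetricSpace X] [MeasurableSpace X] [BorelSpace X]

/-- A "small cover" of `A`: a countable cover whose `∑ diam ^ q` is at most `ε`. -/
def SC (A : Set X) (q ε : ℝ) : Prop :=
  ∃ t : ℕ → Set X, A ⊆ ⋃ n, t n ∧ ∑' n, EMetric.diam (t n) ^ q ≤ ENNReal.ofReal ε

theorem SC.mono_eps {A : Set X} {q ε ε' : ℝ} (h : SC A q ε) (hε : ε ≤ ε') : SC A q ε' := by
  obtain ⟨t, ht, hsum⟩ := h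
  exact ⟨t, ht, hsum.trans (ENNReal.ofReal_le_ofReal hε)⟩

theorem SC.mono_set {A B : Set X} {q ε : ℝ} (h : SC B q ε) (hAB : A ⊆ B) : SC A q ε := by
  obtain ⟨t, ht, hsum⟩ := h
  exact ⟨t, hAB.trans ht, hsum⟩

theorem SC.empty {q ε : ℝ} (hq : 0 < q) (hε : 0 ≤ ε) : SC (∅ : Set X) q ε := by
  refine ⟨fun _ => ∅, by simp, ?_⟩
  simp [EMetric.diam, EMetric.diam_empty, ENNReal.zero_rpow_of_pos hq]

/-- If `A` has arbitrarily small covers (in the `∑ diam ^ q` sense), then `μH[q] A = 0`. -/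
theorem hausdorffMeasure_eq_zero_of_SC {A : Set X} {q : ℝ} (hq : 0 < q)
    (h : ∀ ε : ℝ, 0 < ε → SC A q ε) : μH[q] A = 0 := by
  rw [MeasureTheory.Measure.hausdorffMeasure_apply]
  refine le_antisymm ?_ zero_le
  refine iSup₂_le fun r hr => ?_
  refine ENNReal.le_of_forall_pos_le_add fun ε' hε' _ => ?_
  rw [zero_add]
  -- choose a real ε₁ with `ofReal ε₁ ≤ min ε' (r ^ q)`
  set c : ℝ≥0∞ := min (↑ε') (r ^ q) with hc
  have hrq : (0:ℝ≥0∞) < r ^ q := ENNReal.rpow_pos_of_nonneg hr hq.le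
  have hcpos : 0 < c := lt_min (by exact_mod_cast hε') hrq
  have hcne : c ≠ ⊤ := by
    refine ne_top_of_le_ne_top (by simp) (min_le_left _ _)
  have hctr : 0 < c.toReal := ENNReal.toReal_pos hcpos.ne' hcne
  obtain ⟨t, hcov, hsum⟩ := h (c.toReal / 2) (by positivity)
  have hsum' : ∑' n, EMetric.diam (t n) ^ q ≤ c := by
    refine hsum.trans ?_
    calc ENNReal.ofReal (c.toReal / 2) ≤ ENNReal.ofReal c.toReal :=
          ENNReal.ofReal_le_ofReal (by linarith)
      _ = c := ENNReal.ofReal_toReal hcne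
  have hdiam : ∀ n, EMetric.diam (t n) ≤ r := by
    intro n
    have h1 : EMetric.diam (t n) ^ q ≤ r ^ q := by
      refine le_trans (ENNReal.le_tsum n) (hsum'.trans (min_le_right _ _))
    exact (ENNReal.rpow_le_rpow_iff hq).mp h1
  refine le_trans (iInf_le_of_le t (iInf_le_of_le hcov (iInf_le_of_le hdiam le_rfl))) ?_
  refine le_trans ?_ ((hsum'.trans (min_le_left _ _)))
  refine ENNReal.tsum_le_tsum fun n => ?_
  exact iSup_le fun _ => le_rfl

theorem add_rpow_le' {x y : ℝ≥0∞} {q : ℝ} (hq : 0 ≤ q) :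
    (x + y) ^ q ≤ 2 ^ q * x ^ q + 2 ^ q * y ^ q := by
  have h1 : x + y ≤ 2 * max x y := by
    rcases le_total x y with h | h
    · rw [max_eq_right h, two_mul]; exact add_le_add h le_rfl
    · rw [max_eq_left h, two_mul]; exact add_le_add le_rfl h
  calc (x + y) ^ q ≤ (2 * max x y) ^ q := ENNReal.rpow_le_rpow h1 hq
    _ = 2 ^ q * (max x y) ^ q := ENNReal.mul_rpow_of_nonneg _ _ hq
    _ ≤ 2 ^ q * x ^ q + 2 ^ q * y ^ q := by
      rcases le_total x y with h | h
      · rw [max_eq_right h]; exact le_add_left le_rfl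
      · rw [max_eq_left h]; exact le_add_right le_rfl

/-- If `μH[q] A = 0` then there are open small covers. -/
theorem exists_open_SC {A : Set X} {q : ℝ} (hq : 0 < q) (h : μH[q] A = 0)
    {ε : ℝ} (hε : 0 < ε) :
    ∃ t : ℕ → Set X, (∀ n, IsOpen (t n)) ∧ A ⊆ ⋃ n, t n ∧
      ∑' n, EMetric.diam (t n) ^ q ≤ ENNReal.ofReal ε := by
  classical
  -- extract a cover with `∑ diam ^ q` tiny
  rw [MeasureTheory.Measure.hausdorffMeasure_apply] at h
  have h1 : (⨅ (t : ℕ → Set X) (_ : A ⊆ ⋃ n, t n) (_ : ∀ n, EMetric.diam (t n) ≤ 1),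
      ∑' n, ⨆ _ : (t n).Nonempty, EMetric.diam (t n) ^ q) = 0 := by
    refine le_antisymm ?_ zero_le
    rw [← h]
    exact le_iSup_of_le 1 (le_iSup_of_le one_pos le_rfl)
  set c : ℝ≥0∞ := ENNReal.ofReal ε / (4 * 2 ^ q) with hcdef
  have h2q : (0:ℝ≥0∞) < 2 ^ q := ENNReal.rpow_pos_of_nonneg two_pos hq.le
  have h2qne : (2:ℝ≥0∞) ^ q ≠ ⊤ := by
    exact ENNReal.rpow_ne_top_of_nonneg hq.le (by norm_num)
  have hcpos : 0 < c := by
    refine ENNReal.div_pos (by simpa using hε) ?_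
    exact ENNReal.mul_ne_top (by norm_num) h2qne
  have hcne : c ≠ ⊤ := by
    refine (ENNReal.div_lt_top ENNReal.ofReal_ne_top ?_).ne
    simp only [ne_eq, mul_eq_zero, not_or]
    exact ⟨by norm_num, h2q.ne'⟩
  have h1lt : (⨅ (t : ℕ → Set X) (_ : A ⊆ ⋃ n, t n) (_ : ∀ n, EMetric.diam (t n) ≤ 1),
      ∑' n, ⨆ _ : (t n).Nonempty, EMetric.diam (t n) ^ q) < c := h1 ▸ hcpos
  rw [iInf_lt_iff] at h1lt
  obtain ⟨t, h1lt⟩ := h1lt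
  rw [iInf_lt_iff] at h1lt
  obtain ⟨hcov, h1lt⟩ := h1lt
  rw [iInf_lt_iff] at h1lt
  obtain ⟨hdiam, hsumlt⟩ := h1lt
  -- thicken each set to an open set
  set θ : ℕ → ℝ≥0∞ := fun n => (min (c * 2⁻¹ ^ n) 1) ^ (1 / q) / 2 with hθdef
  have hminpos : ∀ n, 0 < min (c * 2⁻¹ ^ n) 1 := fun n => by
    refine lt_min ?_ one_pos
    exact ENNReal.mul_pos hcpos.ne' (by simp)
  have hminne : ∀ n, min (c * 2⁻¹ ^ n) 1 ≠ ⊤ := fun n =>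
    ne_top_of_le_ne_top one_ne_top (min_le_right _ _)
  have hθpos : ∀ n, 0 < θ n := fun n => by
    refine ENNReal.div_pos ?_ (by norm_num)
    simp only [ne_eq, ENNReal.rpow_eq_zero_iff, not_or, not_and]
    constructor
    · intro h0; exact absurd h0 (hminpos n).ne'
    · intro htop; exact absurd htop (hminne n)
  have hθne : ∀ n, θ n ≠ ⊤ := fun n => by
    refine (ENNReal.div_lt_top ?_ (by norm_num)).ne
    exact ENNReal.rpow_ne_top_of_nonneg (by positivity) (hminne n)
  have h2θ : ∀ n, (2 * θ n) ^ q ≤ c * 2⁻¹ ^ n := fun n => by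
    have h2 : 2 * θ n = (min (c * 2⁻¹ ^ n) 1) ^ (1 / q) := by
      rw [hθdef]; exact ENNReal.mul_div_cancel' (by norm_num) (by norm_num)
    rw [h2, ← ENNReal.rpow_mul, one_div, inv_mul_cancel₀ hq.ne', ENNReal.rpow_one]
    exact min_le_left _ _
  set U : ℕ → Set X := fun n => Metric.thickening (θ n).toReal (t n) with hUdef
  refine ⟨U, fun n => Metric.isOpen_thickening, ?_, ?_⟩
  · refine hcov.trans (Set.iUnion_mono fun n => ?_)
    exact Metric.self_subset_thickening (ENNReal.toReal_pos (hθpos n).ne' (hθne n)) _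
  · have hterm : ∀ n, EMetric.diam (U n) ^ q ≤
        2 ^ q * (⨆ _ : (t n).Nonempty, EMetric.diam (t n) ^ q) + 2 ^ q * (c * 2⁻¹ ^ n) := by
      intro n
      rcases Set.eq_empty_or_nonempty (t n) with he | hne
      · simp [hUdef, he, EMetric.diam, Metric.thickening_empty, ENNReal.zero_rpow_of_pos hq]
      · rw [iSup_pos hne]
        have h1 : EMetric.diam (U n) ≤ EMetric.diam (t n) + 2 * θ n := by
          have h2 := Metric.ediam_thickening_le (s := t n) (θ n).toNNReal
          rw [ENNReal.coe_toNNReal (hθne n)] at h2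
          exact h2
        calc EMetric.diam (U n) ^ q ≤ (EMetric.diam (t n) + 2 * θ n) ^ q :=
              ENNReal.rpow_le_rpow h1 hq.le
          _ ≤ 2 ^ q * EMetric.diam (t n) ^ q + 2 ^ q * (2 * θ n) ^ q := add_rpow_le' hq.le
          _ ≤ _ := add_le_add le_rfl (mul_le_mul_right (h2θ n) _)
    calc ∑' n, EMetric.diam (U n) ^ q
        ≤ ∑' n, (2 ^ q * (⨆ _ : (t n).Nonempty, EMetric.diam (t n) ^ q)
            + 2 ^ q * (c * 2⁻¹ ^ n)) := ENNReal.tsum_le_tsum hterm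
      _ = 2 ^ q * (∑' n, ⨆ _ : (t n).Nonempty, EMetric.diam (t n) ^ q)
            + 2 ^ q * (c * ∑' n : ℕ, 2⁻¹ ^ n) := by
          rw [ENNReal.tsum_add, ENNReal.tsum_mul_left, ENNReal.tsum_mul_left,
            ENNReal.tsum_mul_left]
      _ ≤ 2 ^ q * c + 2 ^ q * (c * 2) := by
          have hgeo : ∑' n : ℕ, (2⁻¹ : ℝ≥0∞) ^ n = 2 := by
            rw [ENNReal.tsum_geometric]
            rw [ENNReal.one_sub_inv_two, inv_inv]
          rw [hgeo]
          exact add_le_add (mul_le_mul_right hsumlt.le _) le_rfl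
      _ ≤ ENNReal.ofReal ε := by
          have h3 : 2 ^ q * c + 2 ^ q * (c * 2) ≤ (4 * 2 ^ q) * c := by
            calc 2 ^ q * c + 2 ^ q * (c * 2) = 3 * (2 ^ q * c) := by ring
              _ ≤ 4 * (2 ^ q * c) := by gcongr <;> norm_num
              _ = (4 * 2 ^ q) * c := by ring
          refine h3.trans ?_
          rw [hcdef, ENNReal.mul_div_cancel ?_ ?_]
          · simp only [ne_eq, mul_eq_zero, not_or]
            exact ⟨by norm_num, h2q.ne'⟩
          · exact ENNReal.mul_ne_top (by norm_num) h2qne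

variable {p : ℕ}

/-- The level set of `f` at level `r`, viewed inside the ambient Euclidean space. -/
def fib (F : Set (EuclideanSpace ℝ (Fin p))) (f : ↥F → ℝ) (r : ℝ) :
    Set (EuclideanSpace ℝ (Fin p)) :=
  Subtype.val '' (f ⁻¹' {r})

/-- If the level set of `f` at `r` is contained in an open set `U`, then all nearby level
sets (of `f`) are contained in `U` as well; this uses compactness of `F`. -/
theorem exists_rho {F : Set (EuclideanSpace ℝ (Fin p))} (hFc : IsCompact F)
    (f : ↥F →ᵇ ℝ) {r : ℝ} {U : Set (EuclideanSpace ℝ (Fin p))}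
    (hU : IsOpen U) (hsub : fib F f r ⊆ U) :
    ∃ ρ > 0, ∀ x : ↥F, |f x - r| ≤ ρ → (x : EuclideanSpace ℝ (Fin p)) ∈ U := by
  haveI : CompactSpace ↥F := isCompact_iff_compactSpace.mp hFc
  set s : Set ↥F := {x : ↥F | (x : EuclideanSpace ℝ (Fin p)) ∉ U} with hsdef
  have hs_closed : IsClosed s := by
    have : s = (Subtype.val ⁻¹' U)ᶜ := rfl
    rw [this]
    exact (hU.preimage continuous_subtype_val).isClosed_compl
  have hs_cpt : IsCompact s := hs_closed.isCompact
  rcases s.eq_empty_or_nonempty with he | hne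
  · exact ⟨1, one_pos, fun x _ => by
      by_contra hx
      exact absurd (he ▸ hx : x ∈ (∅ : Set ↥F)) (Set.notMem_empty x)⟩
  · have hcont : Continuous fun x : ↥F => |f x - r| := (f.continuous.sub continuous_const).abs
    obtain ⟨x₀, hx₀s, hmin⟩ := hs_cpt.exists_isMinOn hne hcont.continuousOn
    have hpos : 0 < |f x₀ - r| := by
      rcases (abs_nonneg (f x₀ - r)).lt_or_eq with h | h
      · exact h
      · exfalso
        have hfx : f x₀ = r := by
          have := h.symm
          rw [abs_eq_zero] at this
          linarith [this]
        exact hx₀s ((hsub ⟨x₀, by simp [hfx], rfl⟩ : (x₀ : EuclideanSpace ℝ (Fin p)) ∈ U))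
    refine ⟨|f x₀ - r| / 2, by positivity, fun x hx => ?_⟩
    by_contra hxU
    have h1 : |f x₀ - r| ≤ |f x - r| := hmin hxU
    linarith

/-- **Key lemma**: if almost every level set of `f` has Hausdorff dimension `< q`, then there
is `δ > 0` such that every `g` within `δ` of `f` has, outside a set of levels of measure
at most `(m+1)⁻¹`, level sets admitting covers with `∑ diam ^ q ≤ ε`. -/
theorem keyD {F : Set (EuclideanSpace ℝ (Fin p))} (hFc : IsCompact F)
    (f : ↥F →ᵇ ℝ) {q : ℝ} (hq : 0 < q)
    (hf : volume {r : ℝ | ENNReal.ofReal q ≤ dimH (fib F f r)} = 0)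
    {ε : ℝ} (hε : 0 < ε) (m : ℕ) :
    ∃ δ > 0, ∀ g : ↥F →ᵇ ℝ, dist g f ≤ δ →
      volume {r : ℝ | ¬ SC (fib F (⇑g) r) q ε} ≤ (↑(m + 1) : ℝ≥0∞)⁻¹ := by
  classical
  set I : Set ℝ := Set.Icc (-(‖f‖ + 1)) (‖f‖ + 1) with hIdef
  set N : Set ℝ := {r : ℝ | ENNReal.ofReal q ≤ dimH (fib F (⇑f) r)} with hNdef
  set Good : Set ℝ := I \ N with hGooddef
  have key : ∀ r ∈ Good, ∃ ρ, 0 < ρ ∧ ρ ≤ 1 ∧ ∀ (g : ↥F →ᵇ ℝ), dist g f ≤ ρ / 2 →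
      ∀ r' : ℝ, |r' - r| < ρ / 2 → SC (fib F (⇑g) r') q ε := by
    intro r hr
    have hdim : dimH (fib F (⇑f) r) < ENNReal.ofReal q := lt_of_not_ge hr.2
    have hμ : μH[q] (fib F (⇑f) r) = 0 := by
      have hcoe : ((q.toNNReal : ℝ≥0∞)) = ENNReal.ofReal q := rfl
      have h0 := hausdorffMeasure_of_dimH_lt (d := q.toNNReal) (by rw [hcoe]; exact hdim)
      rwa [Real.coe_toNNReal q hq.le] at h0
    obtain ⟨t, htopen, htcov, htsum⟩ := exists_open_SC hq hμ hε
    have hcpt : IsCompact (fib F (⇑f) r) := by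
      haveI : CompactSpace ↥F := isCompact_iff_compactSpace.mp hFc
      exact ((isClosed_singleton.preimage f.continuous).isCompact).image continuous_subtype_val
    obtain ⟨sfin, hscov⟩ := hcpt.elim_finite_subcover t htopen htcov
    set U : Set (EuclideanSpace ℝ (Fin p)) := ⋃ i ∈ sfin, t i with hUdef
    have hUopen : IsOpen U := isOpen_biUnion fun i _ => htopen i
    have hSCU : ∀ A : Set (EuclideanSpace ℝ (Fin p)), A ⊆ U → SC A q ε := by
      intro A hA
      refine ⟨fun n => if n ∈ sfin then t n else ∅, ?_, ?_⟩
      · refine hA.trans ?_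
        intro x hx
        rw [hUdef, Set.mem_iUnion₂] at hx
        obtain ⟨i, hi, hxi⟩ := hx
        exact Set.mem_iUnion.mpr ⟨i, by simp [hi, hxi]⟩
      · refine le_trans (ENNReal.tsum_le_tsum fun n => ?_) htsum
        show EMetric.diam (if n ∈ sfin then t n else ∅) ^ q ≤ EMetric.diam (t n) ^ q
        split_ifs with h
        · exact le_rfl
        · simp [EMetric.diam, EMetric.diam_empty, ENNReal.zero_rpow_of_pos hq]
    obtain ⟨ρ₀, hρ₀, hρ₀U⟩ := exists_rho hFc f hUopen hscov
    refine ⟨min ρ₀ 1, lt_min hρ₀ one_pos, min_le_right _ _, ?_⟩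
    intro g hg r' hr'
    refine hSCU _ ?_
    rintro _ ⟨x, hx, rfl⟩
    have hgx : g x = r' := hx
    apply hρ₀U
    have h1 : |f x - g x| ≤ dist g f := by
      rw [abs_sub_comm]
      have h0 := BoundedContinuousFunction.dist_coe_le_dist (f := g) (g := f) x
      rwa [Real.dist_eq] at h0
    have h2 : |f x - r| ≤ |f x - g x| + |r' - r| := by
      have : f x - r = (f x - g x) + (r' - r) := by rw [hgx]; ring
      rw [this]
      exact abs_add_le _ _
    have h3 : |f x - r| ≤ ρ₀ := by
      have hm : min ρ₀ 1 ≤ ρ₀ := min_le_left _ _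
      calc |f x - r| ≤ |f x - g x| + |r' - r| := h2
        _ ≤ min ρ₀ 1 / 2 + min ρ₀ 1 / 2 := add_le_add (h1.trans hg) hr'.le
        _ = min ρ₀ 1 := by ring
        _ ≤ ρ₀ := hm
    exact h3
  choose! ρ hρpos hρ1 hρkey using key
  set W : Set ℝ := ⋃ (r) (_ : r ∈ Good), Metric.ball r (ρ r / 2) with hWdef
  have hWopen : IsOpen W := isOpen_biUnion fun r _ => Metric.isOpen_ball
  have hGoodW : Good ⊆ W := fun r hr =>
    Set.mem_biUnion hr (Metric.mem_ball_self (by have := hρpos r hr; linarith))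
  have hWsub : W ⊆ Set.Icc (-(‖f‖ + 2)) (‖f‖ + 2) := by
    rintro r' hr'
    simp only [hWdef, Set.mem_iUnion] at hr'
    obtain ⟨r, hr, hball⟩ := hr'
    rw [Metric.mem_ball, Real.dist_eq] at hball
    have h1 := hρ1 r hr
    have h2 := hr.1
    simp only [hIdef, Set.mem_Icc] at h2
    have habs := abs_lt.mp hball
    rw [Set.mem_Icc]
    constructor <;> linarith [habs.1, habs.2, h2.1, h2.2]
  have hWvol : volume W ≠ ⊤ := by
    refine (lt_of_le_of_lt (measure_mono hWsub) ?_).ne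
    rw [Real.volume_Icc]
    exact ENNReal.ofReal_lt_top
  have hεne : ((↑(m + 1) : ℝ≥0∞))⁻¹ ≠ 0 := by
    simp [ENNReal.inv_ne_zero]
  obtain ⟨K, hKW, hKcpt, hKvol⟩ :=
    hWopen.measurableSet.exists_isCompact_lt_add (μ := volume) hWvol hεne
  have hKW' : K ⊆ ⋃ i : ↥Good, Metric.ball (i : ℝ) (ρ i / 2) := by
    refine hKW.trans ?_
    rw [hWdef, Set.biUnion_eq_iUnion]
  obtain ⟨sf, hsf⟩ := hKcpt.elim_finite_subcover
    (fun i : ↥Good => Metric.ball (i : ℝ) (ρ i / 2)) (fun i => Metric.isOpen_ball) hKW'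
  set δ : ℝ := if h : sf.Nonempty then min 1 (sf.inf' h fun i => ρ (i : ℝ) / 2) else 1 with hδdef
  have hδpos : 0 < δ := by
    rw [hδdef]
    split_ifs with h
    · refine lt_min one_pos ?_
      rw [Finset.lt_inf'_iff]
      intro i _
      have := hρpos (i : ℝ) i.2
      linarith
    · exact one_pos
  have hδ1 : δ ≤ 1 := by
    rw [hδdef]; split_ifs with h
    · exact min_le_left _ _
    · exact le_rfl
  have hδle : ∀ i ∈ sf, δ ≤ ρ (i : ℝ) / 2 := by
    intro i hi
    rw [hδdef]
    rw [dif_pos ⟨i, hi⟩]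
    exact (min_le_right _ _).trans (Finset.inf'_le _ hi)
  refine ⟨δ, hδpos, fun g hg => ?_⟩
  have hbad : {r : ℝ | ¬ SC (fib F (⇑g) r) q ε} ⊆ N ∪ (W \ K) := by
    intro r hrbad
    have hrI : r ∈ I := by
      by_contra hrI
      refine hrbad (?_ : SC (fib F (⇑g) r) q ε)
      have hfib : fib F (⇑g) r = ∅ := by
        rw [Set.eq_empty_iff_forall_notMem]
        rintro _ ⟨x, hx, rfl⟩
        have hgx : g x = r := hx
        have h1 : |r| ≤ ‖g‖ := by
          rw [← hgx]
          exact (g.norm_coe_le_norm x)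
        have h2 : ‖g‖ ≤ ‖f‖ + dist g f := by
          have := dist_triangle g f 0
          rw [dist_zero_right, dist_zero_right] at this
          linarith [this]
        refine hrI ?_
        rw [hIdef, Set.mem_Icc]
        have := abs_le.mp (h1.trans (by linarith : ‖g‖ ≤ ‖f‖ + 1))
        exact ⟨this.1, this.2⟩
      rw [hfib]
      exact SC.empty hq hε.le
    have hrnotb : ∀ i ∈ sf, r ∉ Metric.ball (i : ℝ) (ρ (i : ℝ) / 2) := by
      intro i hi hmem
      refine hrbad ?_
      rw [Metric.mem_ball, Real.dist_eq] at hmem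
      exact hρkey (i : ℝ) i.2 g (hg.trans (hδle i hi)) r hmem
    have hrK : r ∉ K := by
      intro hrK
      have := hsf hrK
      rw [Set.mem_iUnion] at this
      obtain ⟨i, hi⟩ := this
      rw [Set.mem_iUnion] at hi
      obtain ⟨his, hmem⟩ := hi
      exact hrnotb i his hmem
    by_cases hrW : r ∈ W
    · exact Or.inr ⟨hrW, hrK⟩
    · left
      by_contra hrN
      exact hrW (hGoodW ⟨hrI, hrN⟩)
  calc volume {r : ℝ | ¬ SC (fib F (⇑g) r) q ε} ≤ volume (N ∪ (W \ K)) := measure_mono hbad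
    _ ≤ volume N + volume (W \ K) := measure_union_le _ _
    _ = volume (W \ K) := by rw [hf, zero_add]
    _ ≤ (↑(m + 1) : ℝ≥0∞)⁻¹ := by
      have hd := measure_diff_lt_of_lt_add hKcpt.measurableSet.nullMeasurableSet hKW
        (ne_top_of_le_ne_top hWvol (measure_mono hKW)) hKvol
      exact hd.le
theorem dimH_le_p (s : Set (EuclideanSpace ℝ (Fin p))) : dimH s ≤ (p : ℝ≥0∞) := by
  have h1 : dimH s ≤ dimH (Set.univ : Set (EuclideanSpace ℝ (Fin p))) :=
    dimH_mono (Set.subset_univ s)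
  have h2 : dimH (Set.univ : Set (EuclideanSpace ℝ (Fin p)))
      = dimH (Set.univ : Set (Fin p → ℝ)) :=
    (EuclideanSpace.equiv (Fin p) ℝ).dimH_univ
  rw [h2, Real.dimH_univ_pi_fin] at h1
  exact h1

theorem Dset_subset_Iic (F : Set (EuclideanSpace ℝ (Fin p))) (h : ↥F → ℝ) :
    {d : ℝ | 0 < volume {r : ℝ | ENNReal.ofReal d ≤ dimH (fib F h r)}} ⊆ Set.Iic (p : ℝ) := by
  intro d hd
  have hd' : 0 < volume {r : ℝ | ENNReal.ofReal d ≤ dimH (fib F h r)} := hd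
  rw [Set.mem_Iic]
  by_contra hdp
  push_neg at hdp
  have hempty : {r : ℝ | ENNReal.ofReal d ≤ dimH (fib F h r)} = ∅ := by
    rw [Set.eq_empty_iff_forall_notMem]
    intro r hr
    have h1 : dimH (fib F h r) ≤ (p : ℝ≥0∞) := dimH_le_p _
    have h2 : (p : ℝ≥0∞) < ENNReal.ofReal d := ENNReal.natCast_lt_ofReal.mpr hdp
    exact absurd ((hr.trans h1)) (not_le.mpr h2)
  rw [hempty] at hd'
  simp at hd'

theorem Dset_bddAbove (F : Set (EuclideanSpace ℝ (Fin p))) (h : ↥F → ℝ) :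
    BddAbove {d : ℝ | 0 < volume {r : ℝ | ENNReal.ofReal d ≤ dimH (fib F h r)}} :=
  ⟨(p : ℝ), fun _ hd => Dset_subset_Iic F h hd⟩

theorem DstarF_nonneg (F : Set (EuclideanSpace ℝ (Fin p))) (h : ↥F → ℝ) :
    0 ≤ DstarF F h := by
  refine le_csSup (Dset_bddAbove F h) ?_
  show 0 < volume {r : ℝ | ENNReal.ofReal (0:ℝ) ≤ dimH (fib F h r)}
  have : {r : ℝ | ENNReal.ofReal (0:ℝ) ≤ dimH (fib F h r)} = Set.univ := by
    rw [Set.eq_univ_iff_forall]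
    intro r
    simp
  rw [this, Real.volume_univ]
  exact ENNReal.zero_lt_top

theorem DstarF_le_p (F : Set (EuclideanSpace ℝ (Fin p))) (h : ↥F → ℝ) :
    DstarF F h ≤ (p : ℝ) :=
  Real.sSup_le (fun _ hd => Dset_subset_Iic F h hd) (Nat.cast_nonneg p)

theorem volume_null_of_DstarF_lt (F : Set (EuclideanSpace ℝ (Fin p))) (h : ↥F → ℝ)
    {d : ℝ} (hd : DstarF F h < d) :
    volume {r : ℝ | ENNReal.ofReal d ≤ dimH (fib F h r)} = 0 := by
  by_contra hne
  have hpos : 0 < volume {r : ℝ | ENNReal.ofReal d ≤ dimH (fib F h r)} :=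
    pos_iff_ne_zero.mpr hne
  exact absurd (le_csSup (Dset_bddAbove F h) hpos) (not_le.mpr hd)

theorem DstarF_le_of_null (F : Set (EuclideanSpace ℝ (Fin p))) (h : ↥F → ℝ)
    {S : ℝ} (hS : 0 ≤ S)
    (hall : ∀ d : ℝ, S < d → volume {r : ℝ | ENNReal.ofReal d ≤ dimH (fib F h r)} = 0) :
    DstarF F h ≤ S := by
  refine Real.sSup_le (fun d hd => ?_) hS
  have hd' : 0 < volume {r : ℝ | ENNReal.ofReal d ≤ dimH (fib F h r)} := hd
  by_contra hdS
  push_neg at hdS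
  rw [hall d hdS] at hd'
  simp at hd'

theorem isClosed_holderBall (α : ℝ) (F : Set (EuclideanSpace ℝ (Fin p))) :
    IsClosed (HolderBall α F) := by
  have heq : HolderBall α F = ⋂ (x : ↥F) (y : ↥F),
      {f : ↥F →ᵇ ℝ | |f x - f y| ≤
        dist (x : EuclideanSpace ℝ (Fin p)) (y : EuclideanSpace ℝ (Fin p)) ^ α} := by
    ext f
    simp only [HolderBall, Set.mem_setOf_eq, Set.mem_iInter]
  rw [heq]
  refine isClosed_iInter fun x => isClosed_iInter fun y => ?_
  exact isClosed_le (((BoundedContinuousFunction.lipschitz_eval_const x).continuous.sub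
    (BoundedContinuousFunction.lipschitz_eval_const y).continuous).abs) continuous_const

end Stmt18Aux

open scoped BoundedContinuousFunction ENNReal NNReal in
open Stmt18Aux in
/-- Let `0 < α ≤ 1` and let `F ⊆ ℝ^p` be compact. If
`f₁, f₂, …` is a countable dense subset of `C₁^α(F)`, then there is a dense Gδ
subset `𝒢` of `C₁^α(F)` such that `sup_{g ∈ 𝒢} D_*^g(F) ≤ sup_k D_*^{f_k}(F)`. -/
theorem stmt18 {p : ℕ} (F : Set (EuclideanSpace ℝ (Fin p))) (hFc : IsCompact F)
    (α : ℝ) (hα0 : 0 < α) (hα1 : α ≤ 1)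
    (f : ℕ → ↥(HolderBall α F)) (hdense : Dense (Set.range f)) :
    ∃ G : Set ↥(HolderBall α F), Dense G ∧ IsGδ G ∧
      ∀ g ∈ G, DstarF F ⇑((g : ↥(HolderBall α F)) : BoundedContinuousFunction ↥F ℝ) ≤
        ⨆ k : ℕ, DstarF F ⇑((f k : ↥(HolderBall α F)) : BoundedContinuousFunction ↥F ℝ) := by
  classical
  set S : ℝ := ⨆ k : ℕ,
    DstarF F ⇑((f k : ↥(HolderBall α F)) : BoundedContinuousFunction ↥F ℝ) with hSdef
  have hbdd : BddAbove (Set.range fun k : ℕ =>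
      DstarF F ⇑((f k : ↥(HolderBall α F)) : BoundedContinuousFunction ↥F ℝ)) := by
    refine ⟨(p : ℝ), ?_⟩
    rintro _ ⟨k, rfl⟩
    exact DstarF_le_p F _
  have hSk : ∀ k : ℕ,
      DstarF F ⇑((f k : ↥(HolderBall α F)) : BoundedContinuousFunction ↥F ℝ) ≤ S :=
    fun k => le_ciSup hbdd k
  have hS0 : 0 ≤ S := (DstarF_nonneg F _).trans (hSk 0)
  have hex : ∀ (q : ℚ) (n : ℕ) (k : ℕ), ∃ δ : ℝ, 0 < δ ∧
      (S < (q : ℝ) → ∀ g : ↥F →ᵇ ℝ,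
        dist g ((f k : ↥(HolderBall α F)) : BoundedContinuousFunction ↥F ℝ) ≤ δ →
        volume {r : ℝ | ¬ SC (fib F (⇑g) r) (q : ℝ) (1 / (n + 1))}
          ≤ (↑(n + 1) : ℝ≥0∞)⁻¹) := by
    intro q n k
    by_cases hq : S < (q : ℝ)
    · have hq0 : 0 < (q : ℝ) := lt_of_le_of_lt hS0 hq
      have hnull := volume_null_of_DstarF_lt F
        ⇑((f k : ↥(HolderBall α F)) : BoundedContinuousFunction ↥F ℝ)
        (lt_of_le_of_lt (hSk k) hq)
      have hεpos : (0 : ℝ) < 1 / (n + 1) := by positivity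
      obtain ⟨δ, hδ, hkey⟩ := keyD hFc
        ((f k : ↥(HolderBall α F)) : BoundedContinuousFunction ↥F ℝ) hq0 hnull hεpos n
      exact ⟨δ, hδ, fun _ => hkey⟩
    · exact ⟨1, one_pos, fun h => absurd h hq⟩
  choose δ hδpos hδkey using hex
  set U : ℚ × ℕ → Set ↥(HolderBall α F) :=
    fun qn => ⋃ k : ℕ, Metric.ball (f k) (δ qn.1 qn.2 k) with hUdef
  have hUopen : ∀ qn, IsOpen (U qn) := fun qn => isOpen_iUnion fun k => Metric.isOpen_ball
  have hUdense : ∀ qn, Dense (U qn) := fun qn => by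
    refine hdense.mono ?_
    rintro _ ⟨k, rfl⟩
    exact Set.mem_iUnion.mpr ⟨k, Metric.mem_ball_self (hδpos _ _ _)⟩
  refine ⟨⋂ qn, U qn, ?_, IsGδ.iInter_of_isOpen hUopen, ?_⟩
  · haveI : CompleteSpace ↥(HolderBall α F) := (isClosed_holderBall α F).completeSpace_coe
    exact dense_iInter_of_isOpen hUopen hUdense
  · intro g hg
    refine DstarF_le_of_null F _ hS0 ?_
    intro d hd
    obtain ⟨q, hq1, hq2⟩ := exists_rat_btwn hd
    have hq0 : 0 < (q : ℝ) := lt_of_le_of_lt hS0 hq1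
    set gb : ↥F →ᵇ ℝ := ((g : ↥(HolderBall α F)) : BoundedContinuousFunction ↥F ℝ) with hgbdef
    have hTn : ∀ j : ℕ,
        volume {r : ℝ | ¬ SC (fib F (⇑gb) r) (q : ℝ) (1 / (j + 1))} = 0 := by
      intro j
      have hle : ∀ n : ℕ, j ≤ n →
          volume {r : ℝ | ¬ SC (fib F (⇑gb) r) (q : ℝ) (1 / (j + 1))}
            ≤ (↑(n + 1) : ℝ≥0∞)⁻¹ := by
        intro n hn
        have hgU := Set.mem_iInter.mp hg (q, n)
        obtain ⟨k, hk⟩ := Set.mem_iUnion.mp hgU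
        have hdist : dist gb ((f k : ↥(HolderBall α F)) : BoundedContinuousFunction ↥F ℝ)
            ≤ δ q n k := by
          have h0 := Metric.mem_ball.mp hk
          rw [Subtype.dist_eq] at h0
          exact h0.le
        have hkey := hδkey q n k hq1 gb hdist
        refine le_trans (measure_mono ?_) hkey
        intro r hr
        refine fun hsc => hr (hsc.mono_eps ?_)
        have h1 : (0:ℝ) < (n:ℝ) + 1 := by positivity
        have h2 : (0:ℝ) < (j:ℝ) + 1 := by positivity
        rw [div_le_div_iff₀ h1 h2]
        have : (j:ℝ) ≤ (n:ℝ) := by exact_mod_cast hn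
        linarith
      by_contra hne
      obtain ⟨n0, hn0⟩ := ENNReal.exists_inv_nat_lt hne
      have hfin := hle (max j n0) (le_max_left _ _)
      have h1 : ((max j n0 + 1 : ℕ) : ℝ≥0∞)⁻¹ ≤ ((n0 : ℕ) : ℝ≥0∞)⁻¹ := by
        gcongr
        exact_mod_cast (le_max_right j n0).trans (Nat.le_succ _)
      exact absurd (hfin.trans h1) (not_le.mpr hn0)
    have hsub : {r : ℝ | ENNReal.ofReal d ≤ dimH (fib F (⇑gb) r)} ⊆
        ⋃ j : ℕ, {r : ℝ | ¬ SC (fib F (⇑gb) r) (q : ℝ) (1 / (j + 1))} := by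
      intro r hr
      by_contra hrn
      rw [Set.mem_iUnion] at hrn
      push_neg at hrn
      have hSCall : ∀ ε : ℝ, 0 < ε → SC (fib F (⇑gb) r) (q : ℝ) ε := by
        intro ε hε
        obtain ⟨j, hj⟩ := exists_nat_one_div_lt hε
        have hsc := not_not.mp (hrn j)
        exact hsc.mono_eps hj.le
      have hμ := hausdorffMeasure_eq_zero_of_SC hq0 hSCall
      have hdim : dimH (fib F (⇑gb) r) ≤ ENNReal.ofReal (q : ℝ) := by
        have hcoe : (((q : ℝ).toNNReal : ℝ≥0∞)) = ENNReal.ofReal (q : ℝ) := rfl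
        have hne : μH[(((q : ℝ).toNNReal : ℝ≥0) : ℝ)] (fib F (⇑gb) r) ≠ ⊤ := by
          rw [Real.coe_toNNReal _ hq0.le, hμ]
          exact ENNReal.zero_ne_top
        have := dimH_le_of_hausdorffMeasure_ne_top hne
        rwa [hcoe] at this
      have hled : ENNReal.ofReal d ≤ ENNReal.ofReal (q : ℝ) := hr.trans hdim
      have hlt : ENNReal.ofReal (q : ℝ) < ENNReal.ofReal d := by
        rw [ENNReal.ofReal_lt_ofReal_iff (hq0.trans hq2)]
        exact hq2
      exact absurd hled (not_le.mpr hlt)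
    exact measure_mono_null hsub (measure_iUnion_null fun j => hTn j)

end
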